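/- If N is a Poisson random variable with parameter λ > 0, then for every natural number k ≥ 1, E[N^k]^{1/k} ≤ k / log(1 + k/λ). -/

import Mathlib

open MeasureTheory ENNReal

lemma exp_one_mul_le_exp (y : ℝ) : Real.exp 1 * y ≤ Real.exp y := by
  have h := Real.add_one_le_exp (y - 1)
  calc Real.exp 1 * y ≤ Real.exp 1 * Real.exp (y - 1) := by
        apply mul_le_mul_of_nonneg_left _ (Real.exp_nonneg 1)
        linarith
    _ = Real.exp y := by rw [← Real.exp_add]; ring_nf

lemma tsum_pow_div_factorial (x : ℝ) :
    ∑' n : ℕ, x ^ n / n.factorial = Real.exp x := by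
  rw [Real.exp_eq_exp_ℝ, NormedSpace.exp_eq_tsum_div]

/-- if `N` is a Poisson random variable with parameter `λ > 0`, then for
every `k ≥ 1`, `E[N^k]^{1/k} ≤ k / log(1 + k/λ)`. -/
theorem stmt3 {Ω : Type*} [MeasurableSpace Ω] (P : Measure Ω) [IsProbabilityMeasure P]
    (lam : ℝ) (hlam : 0 < lam) (N : Ω → ℕ)
    (hN : ∀ n : ℕ, P {ω | N ω = n}
      = ENNReal.ofReal (Real.exp (-lam) * lam ^ n / n.factorial))
    (k : ℕ) (hk : 1 ≤ k) :
    ((∫⁻ ω, (N ω : ℝ≥0∞) ^ k ∂P).toReal) ^ ((1 : ℝ) / k)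
      ≤ k / Real.log (1 + k / lam) := by
  have hkpos : (0:ℝ) < k := by exact_mod_cast hk
  set t := Real.log (1 + (k:ℝ) / lam) with ht_def
  have ht : 0 < t := Real.log_pos (by
    have : 0 < (k:ℝ)/lam := div_pos hkpos hlam
    linarith)
  have hexp_t : Real.exp t = 1 + (k:ℝ) / lam :=
    Real.exp_log (by positivity)
  set C := ((k : ℝ) / (Real.exp 1 * t)) ^ k with hC_def
  have hCpos : 0 < C := by positivity
  set p : ℕ → ℝ := fun n => Real.exp (-lam) * lam ^ n / n.factorial with hp_def
  have hp_nonneg : ∀ n, 0 ≤ p n := fun n => by positivity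
  have hp_summable : Summable p := by
    simpa [hp_def, mul_div_assoc] using
      (Real.summable_pow_div_factorial lam).mul_left (Real.exp (-lam))
  have hsum_p : ∑' n, p n = 1 := by
    have h1 : ∑' n, p n = Real.exp (-lam) * ∑' n : ℕ, lam ^ n / n.factorial := by
      rw [← tsum_mul_left]
      exact tsum_congr fun n => by simp [hp_def, mul_div_assoc]
    rw [h1, tsum_pow_div_factorial, ← Real.exp_add]
    simp
  -- total mass of the fibers is 1
  have htot : ∑' m : ℕ, P {ω | N ω = m} = 1 := by
    simp_rw [hN]
    rw [← ENNReal.ofReal_tsum_of_nonneg hp_nonneg hp_summable, hsum_p, ofReal_one]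
  -- each fiber is null-measurable
  have hA : ∀ n : ℕ, NullMeasurableSet {ω | N ω = n} P := by
    intro n
    set A := {ω | N ω = n} with hA_def
    have hsub : Aᶜ ⊆ ⋃ m, (if m = n then (∅ : Set Ω) else {ω | N ω = m}) := by
      intro ω hω
      refine Set.mem_iUnion.2 ⟨N ω, ?_⟩
      have hne : N ω ≠ n := hω
      simp [hne]
    have h1 : P Aᶜ ≤ ∑' m : ℕ, (if m = n then 0 else P {ω | N ω = m}) := by
      refine (measure_mono hsub).trans ?_
      refine (measure_iUnion_le _).trans (le_of_eq (tsum_congr fun m => ?_))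
      split_ifs <;> simp
    have h2 : P A + P Aᶜ ≤ 1 := by
      calc P A + P Aᶜ ≤ P A + ∑' m : ℕ, (if m = n then 0 else P {ω | N ω = m}) :=
            add_le_add le_rfl h1
        _ = ∑' m : ℕ, P {ω | N ω = m} := by
            have h := ENNReal.tsum_eq_add_tsum_ite (f := fun m : ℕ => P {ω | N ω = m}) n
            convert h.symm using 2
            refine tsum_congr fun m => ?_
            rcases Nat.decEq m n with h'|h' <;> simp [h']
        _ = 1 := htot
    have hBm := measurableSet_toMeasurable P A
    have hCm := measurableSet_toMeasurable P Aᶜ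
    have hunion : toMeasurable P A ∪ toMeasurable P Aᶜ = Set.univ := by
      rw [Set.eq_univ_iff_forall]
      intro ω
      by_cases h : ω ∈ A
      · exact Or.inl (subset_toMeasurable _ _ h)
      · exact Or.inr (subset_toMeasurable _ _ h)
    have hinter : P (toMeasurable P A ∩ toMeasurable P Aᶜ) = 0 := by
      have hadd := measure_union_add_inter (μ := P) (toMeasurable P A) hCm
      rw [hunion, measure_univ, measure_toMeasurable, measure_toMeasurable] at hadd
      have hle : (1:ℝ≥0∞) + P (toMeasurable P A ∩ toMeasurable P Aᶜ) ≤ 1 + 0 := by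
        rw [hadd, add_zero]; exact h2
      have := (ENNReal.add_le_add_iff_left (a := 1) one_ne_top).mp hle
      exact le_antisymm this (by positivity)
    have hae : toMeasurable P A =ᵐ[P] A := by
      rw [MeasureTheory.ae_eq_set]
      constructor
      · refine measure_mono_null ?_ hinter
        intro ω hω
        exact ⟨hω.1, subset_toMeasurable _ _ (hω.2 : ω ∈ Aᶜ)⟩
      · rw [Set.diff_eq_empty.2 (subset_toMeasurable P A)]
        exact measure_empty
    exact hBm.nullMeasurableSet.congr hae
  have hNm : NullMeasurable N P := by
    intro s _
    have hs : N ⁻¹' s = ⋃ n ∈ s, {ω | N ω = n} := by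
      ext ω; simp [Set.mem_iUnion, eq_comm]
    show NullMeasurableSet (N ⁻¹' s) P
    rw [hs]
    exact NullMeasurableSet.biUnion (Set.to_countable s) (fun n _ => hA n)
  have hAE : AEMeasurable N P := hNm.aemeasurable
  -- rewrite the integral as a sum
  have hmap : ∫⁻ ω, (N ω : ℝ≥0∞) ^ k ∂P
      = ∑' n : ℕ, (n : ℝ≥0∞) ^ k * P {ω | N ω = n} := by
    have hg : Measurable fun n : ℕ => (n : ℝ≥0∞) ^ k := measurable_from_top
    rw [← lintegral_map' hg.aemeasurable hAE, lintegral_countable']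
    refine tsum_congr fun n => ?_
    rw [Measure.map_apply_of_aemeasurable hAE (measurableSet_singleton n)]
    congr 1
  -- pointwise bound
  have key : ∀ n : ℕ, ((n:ℝ))^k ≤ C * Real.exp (t * n) := by
    intro n
    have h1 : Real.exp 1 * (t * n / k) ≤ Real.exp (t * n / k) := exp_one_mul_le_exp _
    have h2 : (Real.exp 1 * (t * n / k))^k ≤ (Real.exp (t * n / k))^k :=
      pow_le_pow_left₀ (by positivity) h1 k
    have h3 : (Real.exp (t * n / k))^k = Real.exp (t * n) := by
      rw [← Real.exp_nat_mul]
      congr 1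
      field_simp
    have h4 : ((n:ℝ))^k = C * (Real.exp 1 * (t * n / k))^k := by
      rw [hC_def, ← mul_pow]
      congr 1
      field_simp
    rw [h4, ← h3]
    exact mul_le_mul_of_nonneg_left h2 (le_of_lt hCpos)
  have hterm : ∀ n : ℕ, (n : ℝ≥0∞) ^ k * P {ω | N ω = n}
      ≤ ENNReal.ofReal ((C * Real.exp (-lam)) * ((lam * Real.exp t) ^ n / n.factorial)) := by
    intro n
    rw [hN n, show ((n:ℕ) : ℝ≥0∞)^k = ENNReal.ofReal (((n:ℕ):ℝ)^k) by
      rw [ENNReal.ofReal_pow (by positivity), ENNReal.ofReal_natCast],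
      ← ENNReal.ofReal_mul (by positivity)]
    apply ENNReal.ofReal_le_ofReal
    calc ((n:ℕ):ℝ)^k * (Real.exp (-lam) * lam^n / n.factorial)
        ≤ (C * Real.exp (t * n)) * (Real.exp (-lam) * lam^n / n.factorial) :=
          mul_le_mul_of_nonneg_right (key n) (by positivity)
      _ = (C * Real.exp (-lam)) * ((lam * Real.exp t)^n / n.factorial) := by
          rw [mul_pow, mul_comm t (n:ℝ), Real.exp_nat_mul]
          ring
  have hsummable2 : Summable (fun n : ℕ =>
      (C * Real.exp (-lam)) * ((lam * Real.exp t) ^ n / n.factorial)) :=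
    (Real.summable_pow_div_factorial (lam * Real.exp t)).mul_left _
  have halg : (C * Real.exp (-lam)) * Real.exp (lam * Real.exp t) = ((k:ℝ) / t) ^ k := by
    have h5 : lam * Real.exp t = lam + k := by
      rw [hexp_t]; field_simp
    rw [h5, mul_assoc, ← Real.exp_add]
    have h6 : -lam + (lam + (k:ℝ)) = (k:ℝ) := by ring
    rw [h6]
    have h7 : Real.exp (k:ℝ) = Real.exp 1 ^ k := by
      rw [← Real.exp_nat_mul, mul_one]
    rw [hC_def, h7, ← mul_pow]
    congr 1
    field_simp
  have hbound : ∑' n : ℕ, (n : ℝ≥0∞) ^ k * P {ω | N ω = n}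
      ≤ ENNReal.ofReal (((k:ℝ) / t) ^ k) := by
    calc ∑' n : ℕ, (n : ℝ≥0∞) ^ k * P {ω | N ω = n}
        ≤ ∑' n : ℕ, ENNReal.ofReal
            ((C * Real.exp (-lam)) * ((lam * Real.exp t) ^ n / n.factorial)) :=
          ENNReal.tsum_le_tsum hterm
      _ = ENNReal.ofReal (∑' n : ℕ,
            (C * Real.exp (-lam)) * ((lam * Real.exp t) ^ n / n.factorial)) :=
          (ENNReal.ofReal_tsum_of_nonneg (fun n => by positivity) hsummable2).symm
      _ = ENNReal.ofReal (((k:ℝ) / t) ^ k) := by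
          rw [tsum_mul_left, tsum_pow_div_factorial, halg]
  have hfin : (∫⁻ ω, (N ω : ℝ≥0∞) ^ k ∂P).toReal ≤ ((k:ℝ) / t) ^ k := by
    rw [hmap]
    exact ENNReal.toReal_le_of_le_ofReal (by positivity) hbound
  calc ((∫⁻ ω, (N ω : ℝ≥0∞) ^ k ∂P).toReal) ^ ((1 : ℝ) / k)
      ≤ (((k:ℝ) / t) ^ k) ^ ((1 : ℝ) / k) :=
        Real.rpow_le_rpow ENNReal.toReal_nonneg hfin (by positivity)
    _ = (k:ℝ) / t := by
        rw [← Real.rpow_natCast ((k:ℝ)/t) k, ← Real.rpow_mul (by positivity),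
          mul_one_div, div_self (ne_of_gt hkpos), Real.rpow_one]
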